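/- Let X := [-1,1]^d and P a probability measure on X × {-1,1} with fixed posterior version η. If η is Hölder-continuous with exponent γ ∈ (0,1], i.e. there is c > 0 with |η(x) − η(x')| ≤ c ‖x − x'‖_∞^γ for all x, x' ∈ X, then Δ_η controls the noise from above with exponent γ: with c_UC := 2c one has |2η(x) − 1| ≤ c_UC Δ_η(x)^γ for all x ∈ X. -/

import Mathlib

open MeasureTheory Set Metric
open scoped Classical ENNReal NNReal

noncomputable section

namespace RefinedMargin

abbrev Pt (d : ℕ) := Fin d → ℝ

/-- The input space `X = [-1,1]^d` (with the supremum norm coming from `Fin d → ℝ`). -/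
def cubeX (d : ℕ) : Set (Pt d) := Set.Icc (fun _ => (-1 : ℝ)) (fun _ => (1 : ℝ))

variable {d : ℕ} {s : ℝ}

/-- `X_1 = {x ∈ X : η x > 1/2}`. -/
def X1 (η : Pt d → ℝ) : Set (Pt d) := {x | x ∈ cubeX d ∧ 1 / 2 < η x}

/-- `X_{-1} = {x ∈ X : η x < 1/2}`. -/
def Xm1 (η : Pt d → ℝ) : Set (Pt d) := {x | x ∈ cubeX d ∧ η x < 1 / 2}

/-- `X_0 = {x ∈ X : η x = 1/2}`. -/
def X0 (η : Pt d → ℝ) : Set (Pt d) := {x | x ∈ cubeX d ∧ η x = 1 / 2}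

/-- Distance to the decision boundary. -/
def Δ (η : Pt d → ℝ) (x : Pt d) : ℝ :=
  if x ∈ Xm1 η then Metric.infDist x (X1 η)
  else if x ∈ X1 η then Metric.infDist x (Xm1 η)
  else 0

/-- Relative boundary of `T` in `X`. -/
def relBoundary (X T : Set (Pt d)) : Set (Pt d) := closure T ∩ closure (X \ T) ∩ X

/-- `T` is `m`-rectifiable: the image of a bounded subset of `ℝ^m` under a Lipschitz map. -/
def IsRectifiable (m : ℕ) (T : Set (Pt d)) : Prop :=
  ∃ (B : Set (Fin m → ℝ)) (g : (Fin m → ℝ) → Pt d) (K : NNReal),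
    Bornology.IsBounded B ∧ LipschitzOnWith K g B ∧ g '' B = T

/-- Margin exponent `α` with constant `cME`. -/
def HasME (μ : Measure (Pt d)) (η : Pt d → ℝ) (α cME : ℝ) : Prop :=
  ∀ t : ℝ, 0 < t → μ {x | Δ η x < t} ≤ ENNReal.ofReal ((cME * t) ^ α)

/-- Margin-noise exponent `β` with constant `cMNE`. -/
def HasMNE (μ : Measure (Pt d)) (η : Pt d → ℝ) (β cMNE : ℝ) : Prop :=
  ∀ t : ℝ, 0 < t → (∫ x in {x | Δ η x < t}, |2 * η x - 1| ∂μ) ≤ (cMNE * t) ^ β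

/-- The distance to the decision boundary controls the noise from below with
exponent `γ` and constant `cLC`. -/
def LowerControl (μ : Measure (Pt d)) (η : Pt d → ℝ) (γ cLC : ℝ) : Prop :=
  ∀ᵐ x ∂μ, Δ η x ^ γ ≤ cLC * |2 * η x - 1|

/-- A partition of `ℝ^d` into (half-open) cubes of side length `s`. -/
structure CubePartition (d : ℕ) (s : ℝ) where
  cell : ℕ → Set (Pt d)
  isCube : ∀ j, ∃ a : Pt d, cell j = {x | ∀ i, a i ≤ x i ∧ x i < a i + s}
  covers : ∀ x : Pt d, ∃! j, x ∈ cell j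

namespace CubePartition

/-- Index of the unique cell containing `x`. -/
def idx (𝒜 : CubePartition d s) (x : Pt d) : ℕ := (𝒜.covers x).choose

/-- The unique cell `A(x)` containing `x`. -/
def cellOf (𝒜 : CubePartition d s) (x : Pt d) : Set (Pt d) := 𝒜.cell (𝒜.idx x)

/-- Indices of cells intersecting `X`. -/
def J (𝒜 : CubePartition d s) : Set ℕ := {j | (𝒜.cell j ∩ cubeX d).Nonempty}

/-- Indices of cells near the decision boundary. -/
def JN (𝒜 : CubePartition d s) (η : Pt d → ℝ) (r : ℝ) : Set ℕ :=
  {j | j ∈ 𝒜.J ∧ ∀ x ∈ 𝒜.cell j ∩ cubeX d, Δ η x ≤ 3 * r}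

/-- Indices of cells far from the decision boundary. -/
def JF (𝒜 : CubePartition d s) (η : Pt d → ℝ) (r : ℝ) : Set ℕ :=
  {j | j ∈ 𝒜.J ∧ ∀ x ∈ 𝒜.cell j ∩ cubeX d, r ≤ Δ η x}

/-- `N_r`, the union of the cells near the decision boundary. -/
def Nr (𝒜 : CubePartition d s) (η : Pt d → ℝ) (r : ℝ) : Set (Pt d) := ⋃ j ∈ 𝒜.JN η r, 𝒜.cell j

/-- `F_r`, the union of the cells far from the decision boundary. -/
def Fr (𝒜 : CubePartition d s) (η : Pt d → ℝ) (r : ℝ) : Set (Pt d) := ⋃ j ∈ 𝒜.JF η r, 𝒜.cell j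

end CubePartition

/-- `sign` with the convention `sign 0 = 1`. -/
def sgn (t : ℝ) : ℝ := if 0 ≤ t then 1 else -1

/-- The classification loss `L(y,t) = 1_{(-∞,0]}(y · sign t)`. -/
def cLoss (y t : ℝ) : ℝ := if y * sgn t ≤ 0 then 1 else 0

/-- The restricted classification loss `L_T(x,y,t) = 1_T(x) L(y,t)`. -/
def rLoss (T : Set (Pt d)) (x : Pt d) (y t : ℝ) : ℝ := if x ∈ T then cLoss y t else 0

/-- The joint distribution `P` on `X × {-1,1} ⊆ ℝ^d × ℝ` built from the marginal `μ = P_X`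
and the posterior probability `η`. -/
def joint (μ : Measure (Pt d)) (η : Pt d → ℝ) : Measure (Pt d × ℝ) :=
  μ.bind fun x =>
    ENNReal.ofReal (η x) • Measure.dirac (x, 1) + ENNReal.ofReal (1 - η x) • Measure.dirac (x, -1)

/-- The risk `R_{L_T,P}(f)`. -/
def risk (P : Measure (Pt d × ℝ)) (T : Set (Pt d)) (f : Pt d → ℝ) : ℝ :=
  ∫ z, rLoss T z.1 z.2 (f z.1) ∂P

/-- The Bayes risk `R*_{L_T,P}`, the infimum over all measurable functions. -/
def bayesRisk (P : Measure (Pt d × ℝ)) (T : Set (Pt d)) : ℝ :=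
  ⨅ f : { f : Pt d → ℝ // Measurable f }, risk P T f.1

/-- The Bayes decision function `sign (2η - 1)`. -/
def bayesF (η : Pt d → ℝ) (x : Pt d) : ℝ := sgn (2 * η x - 1)

/-- The empirical risk of `f` on the dataset `D` for the restricted loss `L_T`. -/
def empRisk {n : ℕ} (D : Fin n → Pt d × ℝ) (T : Set (Pt d)) (f : Pt d → ℝ) : ℝ :=
  (∑ i, rLoss T (D i).1 (D i).2 (f (D i).1)) / (n : ℝ)

/-- `f_{D,s}`. -/
def fHat (𝒜 : CubePartition d s) {n : ℕ} (D : Fin n → Pt d × ℝ) (x : Pt d) : ℝ :=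
  ((∑ i, if (D i).2 = 1 ∧ (D i).1 ∈ 𝒜.cellOf x then (1 : ℝ) else 0) -
      ∑ i, if (D i).2 = -1 ∧ (D i).1 ∈ 𝒜.cellOf x then (1 : ℝ) else 0) / (n : ℝ)

/-- The empirical histogram rule `h_{D,s} = sign f_{D,s}`. -/
def histRule (𝒜 : CubePartition d s) {n : ℕ} (D : Fin n → Pt d × ℝ) (x : Pt d) : ℝ :=
  sgn (fHat 𝒜 D x)

/-- `f_{P,s}`. -/
def fBar (𝒜 : CubePartition d s) (P : Measure (Pt d × ℝ)) (x : Pt d) : ℝ :=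
  (P (𝒜.cellOf x ×ˢ ({1} : Set ℝ))).toReal - (P (𝒜.cellOf x ×ˢ ({-1} : Set ℝ))).toReal

/-- The infinite-sample histogram rule `h_{P,s} = sign f_{P,s}`. -/
def histRuleP (𝒜 : CubePartition d s) (P : Measure (Pt d × ℝ)) (x : Pt d) : ℝ :=
  sgn (fBar 𝒜 P x)

/-- The class `𝓕` of `±1`-valued functions which are constant on the cells meeting `X`
(and `0` elsewhere). -/
def histClass (𝒜 : CubePartition d s) : Set (Pt d → ℝ) :=
  {f | ∃ c : ℕ → ℝ, (∀ j, c j = 1 ∨ c j = -1) ∧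
    ∀ x, f x = if 𝒜.idx x ∈ 𝒜.J then c (𝒜.idx x) else 0}

/-- The `n`-fold product measure `P^n`. -/
def Pn (μ : Measure (Pt d)) (η : Pt d → ℝ) (n : ℕ) : Measure (Fin n → Pt d × ℝ) :=
  Measure.pi fun _ => joint μ η

/-- Distance to the decision boundary, with values in `[0,∞]` and the convention
`inf ∅ = ∞`. -/
def De {d : ℕ} (η : Pt d → ℝ) (x : Pt d) : ℝ≥0∞ :=
  if x ∈ Xm1 η then EMetric.infEdist x (X1 η)
  else if x ∈ X1 η then EMetric.infEdist x (Xm1 η)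
  else 0

private lemma aux_le {d : ℕ} (x : Pt d) (A : Set (Pt d)) (a γ c : ℝ)
    (hc : 0 < c) (hγ : 0 < γ)
    (h : ∀ y ∈ A, a ≤ 2 * c * dist x y ^ γ) :
    ENNReal.ofReal a ≤ ENNReal.ofReal (2 * c) * (EMetric.infEdist x A) ^ γ := by
  rcases A.eq_empty_or_nonempty with rfl | hA
  · rw [show EMetric.infEdist x ∅ = ⊤ from EMetric.infEdist_empty, ENNReal.top_rpow_of_pos hγ, ENNReal.mul_top]
    · exact le_top
    · simp only [ne_eq, ENNReal.ofReal_eq_zero, not_le]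
      linarith
  · have hr0 : 0 ≤ Metric.infDist x A := Metric.infDist_nonneg
    have key : a ≤ 2 * c * Metric.infDist x A ^ γ := by
      by_contra h'
      push_neg at h'
      have hcont : ContinuousAt (fun s : ℝ => 2 * c * s ^ γ) (Metric.infDist x A) :=
        continuousAt_const.mul (Real.continuousAt_rpow_const _ _ (Or.inr hγ.le))
      have hev : ∀ᶠ s in nhds (Metric.infDist x A), 2 * c * s ^ γ < a :=
        hcont (Iio_mem_nhds h')
      obtain ⟨t, ht, htv⟩ := hev.exists_gt
      obtain ⟨y, hyA, hyd⟩ := (Metric.infDist_lt_iff hA).mp ht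
      have hle : a ≤ 2 * c * t ^ γ := by
        refine (h y hyA).trans ?_
        gcongr
        all_goals first | exact dist_nonneg | exact hyd.le
      linarith
    have hne : EMetric.infEdist x A ≠ ⊤ := Metric.infEdist_ne_top hA
    have hEq : EMetric.infEdist x A = ENNReal.ofReal (Metric.infDist x A) := by
      rw [Metric.infDist]; exact (ENNReal.ofReal_toReal hne).symm
    calc ENNReal.ofReal a ≤ ENNReal.ofReal (2 * c * Metric.infDist x A ^ γ) :=
          ENNReal.ofReal_le_ofReal key
      _ = ENNReal.ofReal (2 * c) * ENNReal.ofReal (Metric.infDist x A ^ γ) :=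
          ENNReal.ofReal_mul (by positivity)
      _ = ENNReal.ofReal (2 * c) * (ENNReal.ofReal (Metric.infDist x A)) ^ γ := by
          rw [ENNReal.ofReal_rpow_of_nonneg hr0 hγ.le]
      _ = ENNReal.ofReal (2 * c) * (EMetric.infEdist x A) ^ γ := by rw [hEq]

theorem statement10 (d : ℕ) (hd : 1 ≤ d)
    (μ : Measure (Pt d)) [IsProbabilityMeasure μ] (hμX : μ (cubeX d)ᶜ = 0)
    (η : Pt d → ℝ) (hη : ∀ x, η x ∈ Set.Icc (0 : ℝ) 1)
    (γ : ℝ) (hγ : γ ∈ Set.Ioc (0 : ℝ) 1) (c : ℝ) (hc : 0 < c)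
    (hHol : ∀ x ∈ cubeX d, ∀ x' ∈ cubeX d, |η x - η x'| ≤ c * dist x x' ^ γ) :
    ∀ x ∈ cubeX d, ENNReal.ofReal |2 * η x - 1| ≤ ENNReal.ofReal (2 * c) * De η x ^ γ := by
  intro x hx
  rcases lt_trichotomy (η x) (1 / 2) with h | h | h
  · have hxm : x ∈ Xm1 η := ⟨hx, h⟩
    rw [De, if_pos hxm]
    have habs : |2 * η x - 1| = 1 - 2 * η x := by
      rw [abs_of_nonpos (by linarith)]; ring
    rw [habs]
    refine aux_le x (X1 η) _ γ c hc hγ.1 ?_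
    intro y hy
    have h1 := hHol x hx y hy.1
    have h2 : η y - η x ≤ |η x - η y| := by
      rw [abs_sub_comm]; exact le_abs_self _
    have := hy.2
    nlinarith
  · rw [h]
    norm_num
  · have hxm : x ∉ Xm1 η := fun hmem => absurd hmem.2 (not_lt.mpr h.le)
    have hx1 : x ∈ X1 η := ⟨hx, h⟩
    rw [De, if_neg hxm, if_pos hx1]
    have habs : |2 * η x - 1| = 2 * η x - 1 := by
      rw [abs_of_nonneg (by linarith)]
    rw [habs]
    refine aux_le x (Xm1 η) _ γ c hc hγ.1 ?_
    intro y hy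
    have h1 := hHol x hx y hy.1
    have h2 : η x - η y ≤ |η x - η y| := le_abs_self _
    have := hy.2
    nlinarith

end RefinedMargin
end
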